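/- For every μ > 0 and θ > 0, the family (f_NB(x, μ, θ))_{x ∈ ℕ} has sum 1; equivalently, Σ_{x=0}^∞ Γ(x+θ)/(Γ(x+1)·Γ(θ)) · (μ/(θ+μ))^x = ((θ+μ)/θ)^θ, where the exponent θ is a real power and Γ is the real Gamma function. -/

import Mathlib

/-- Dirac delta at zero on the naturals. -/
noncomputable def delta0 (x : ℕ) : ℝ := if x = 0 then 1 else 0

/-- Negative binomial probability mass function with mean `μ` and dispersion `θ`. -/
noncomputable def fNB (x : ℕ) (μ θ : ℝ) : ℝ :=
  Real.Gamma (x + θ) / (Real.Gamma (x + 1) * Real.Gamma θ) *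
    (θ / (θ + μ)) ^ θ * (μ / (θ + μ)) ^ x

/-- Zero-inflated negative binomial probability mass function. -/
noncomputable def fZINB (x : ℕ) (μ θ π : ℝ) : ℝ :=
  π * delta0 x + (1 - π) * fNB x μ θ

/-- The logistic function. -/
noncomputable def logistic (t : ℝ) : ℝ := Real.exp t / (1 + Real.exp t)

open MeasureTheory Set Real

lemma integrableOn_rpow_mul_exp_neg_mul {s r : ℝ} (hs : 0 < s) (hr : 0 < r) :
    IntegrableOn (fun t : ℝ => t ^ (s - 1) * Real.exp (-(r * t))) (Ioi 0) := by
  have h0 : IntegrableOn (fun x : ℝ => Real.exp (-x) * x ^ (s - 1)) (Ioi 0) :=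
    Real.GammaIntegral_convergent hs
  have h1 : IntegrableOn (fun t : ℝ => Real.exp (-(r * t)) * (r * t) ^ (s - 1)) (Ioi 0) := by
    have := (integrableOn_Ioi_comp_mul_left_iff
      (fun x : ℝ => Real.exp (-x) * x ^ (s - 1)) 0 hr).2 (by simpa using h0)
    simpa using this
  have h2 : IntegrableOn
      (fun t : ℝ => (r ^ (s - 1))⁻¹ * (Real.exp (-(r * t)) * (r * t) ^ (s - 1))) (Ioi 0) :=
    h1.const_mul _
  refine h2.congr_fun (fun t ht => ?_) measurableSet_Ioi
  rw [mem_Ioi] at ht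
  beta_reduce
  rw [Real.mul_rpow hr.le ht.le]
  field_simp [(Real.rpow_pos_of_pos hr (s-1)).ne']

lemma negBinomial_hasSum {p θ : ℝ} (hθ : 0 < θ) (hp0 : 0 < p) (hp1 : p < 1) :
    HasSum (fun x : ℕ => Real.Gamma ((x : ℝ) + θ) / (Real.Gamma ((x : ℝ) + 1) * Real.Gamma θ)
      * p ^ x) ((1 - p) ^ (-θ)) := by
  set r : ℝ := 1 - p with hr_def
  have hr : 0 < r := by simp only [hr_def]; linarith
  set b : ℕ → ℝ := fun x => p ^ x / Real.Gamma ((x : ℝ) + 1) * Real.Gamma ((x : ℝ) + θ) with hb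
  set F : ℕ → ℝ → ℝ := fun x t =>
    p ^ x / Real.Gamma ((x : ℝ) + 1) * (Real.exp (-t) * t ^ ((x : ℝ) + θ - 1)) with hF
  have hGp : ∀ x : ℕ, 0 < Real.Gamma ((x : ℝ) + 1) := fun x =>
    Real.Gamma_pos_of_pos (by positivity)
  have hxθ : ∀ x : ℕ, (0 : ℝ) < (x : ℝ) + θ := fun x => by positivity
  have hbnn : ∀ x, 0 ≤ b x := fun x => by
    have h1 := (hGp x).le
    have h2 := (Real.Gamma_pos_of_pos (hxθ x)).le
    positivity
  set C : ℝ := (1 / r) ^ θ * Real.Gamma θ with hC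
  have hCpos : 0 < C := by
    have := Real.Gamma_pos_of_pos hθ
    positivity
  -- Claim A : each lintegral
  have claimA : ∀ x : ℕ, (∫⁻ t in Ioi (0:ℝ), ENNReal.ofReal (F x t)) = ENNReal.ofReal (b x) := by
    intro x
    have hint : IntegrableOn (fun t : ℝ => Real.exp (-t) * t ^ ((x : ℝ) + θ - 1)) (Ioi 0) :=
      Real.GammaIntegral_convergent (hxθ x)
    have hint2 : IntegrableOn (F x) (Ioi 0) := hint.const_mul _
    have hnn : 0 ≤ᵐ[volume.restrict (Ioi (0:ℝ))] F x := by
      refine (ae_restrict_iff' measurableSet_Ioi).2 (ae_of_all _ fun t ht => ?_)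
      rw [mem_Ioi] at ht
      have h1 := (hGp x).le
      have h2 := Real.exp_nonneg (-t)
      have h3 := Real.rpow_nonneg ht.le ((x : ℝ) + θ - 1)
      positivity
    rw [← ofReal_integral_eq_lintegral_ofReal hint2 hnn]
    congr 1
    rw [hF]
    simp only
    rw [MeasureTheory.integral_const_mul, ← Real.Gamma_eq_integral (hxθ x)]
  -- Claim B : the integrand sum
  have claimB : (∫⁻ t in Ioi (0:ℝ), ∑' x : ℕ, ENNReal.ofReal (F x t)) = ENNReal.ofReal C := by
    have hcongr : ∀ t ∈ Ioi (0:ℝ), (∑' x : ℕ, ENNReal.ofReal (F x t))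
        = ENNReal.ofReal (t ^ (θ - 1) * Real.exp (-(r * t))) := by
      intro t ht
      rw [mem_Ioi] at ht
      have hFeq : ∀ x : ℕ, F x t = (Real.exp (-t) * t ^ (θ - 1)) * ((p * t) ^ x / x.factorial) := by
        intro x
        rw [hF]
        simp only
        rw [Real.Gamma_nat_eq_factorial x]
        have htx : t ^ ((x : ℝ) + θ - 1) = t ^ (x : ℕ) * t ^ (θ - 1) := by
          rw [← Real.rpow_natCast t x, ← Real.rpow_add ht]
          ring_nf
        rw [htx, mul_pow]
        ring
      have hsum : Summable (fun x : ℕ =>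
          (Real.exp (-t) * t ^ (θ - 1)) * ((p * t) ^ x / x.factorial)) :=
        (Real.summable_pow_div_factorial (p * t)).mul_left _
      have htsum : ∑' x : ℕ, (Real.exp (-t) * t ^ (θ - 1)) * ((p * t) ^ x / x.factorial)
          = t ^ (θ - 1) * Real.exp (-(r * t)) := by
        rw [tsum_mul_left]
        have : ∑' x : ℕ, (p * t) ^ x / (x.factorial : ℝ) = Real.exp (p * t) := by
          rw [Real.exp_eq_exp_ℝ, NormedSpace.exp_eq_tsum_div]
        rw [this]
        have harg : -t + p * t = -(r * t) := by rw [hr_def]; ring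
        rw [mul_comm (Real.exp (-t)) (t ^ (θ - 1)), mul_assoc, ← Real.exp_add, harg]
      have hnn : ∀ x : ℕ, 0 ≤ (Real.exp (-t) * t ^ (θ - 1)) * ((p * t) ^ x / x.factorial) := by
        intro x
        have h1 := Real.exp_nonneg (-t)
        have h2 := Real.rpow_nonneg ht.le (θ - 1)
        have h3 : (0:ℝ) ≤ p * t := by positivity
        positivity
      calc (∑' x : ℕ, ENNReal.ofReal (F x t))
          = ∑' x : ℕ, ENNReal.ofReal
            ((Real.exp (-t) * t ^ (θ - 1)) * ((p * t) ^ x / x.factorial)) := by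
            exact tsum_congr fun x => by rw [hFeq x]
        _ = ENNReal.ofReal (∑' x : ℕ,
            (Real.exp (-t) * t ^ (θ - 1)) * ((p * t) ^ x / x.factorial)) :=
            (ENNReal.ofReal_tsum_of_nonneg hnn hsum).symm
        _ = ENNReal.ofReal (t ^ (θ - 1) * Real.exp (-(r * t))) := by rw [htsum]
    rw [setLIntegral_congr_fun measurableSet_Ioi hcongr]
    have hint : IntegrableOn (fun t : ℝ => t ^ (θ - 1) * Real.exp (-(r * t))) (Ioi 0) :=
      integrableOn_rpow_mul_exp_neg_mul hθ hr
    have hnn : 0 ≤ᵐ[volume.restrict (Ioi (0:ℝ))]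
        (fun t : ℝ => t ^ (θ - 1) * Real.exp (-(r * t))) := by
      refine (ae_restrict_iff' measurableSet_Ioi).2 (ae_of_all _ fun t ht => ?_)
      rw [mem_Ioi] at ht
      have h2 := Real.rpow_nonneg ht.le (θ - 1)
      positivity
    rw [← ofReal_integral_eq_lintegral_ofReal hint hnn,
      Real.integral_rpow_mul_exp_neg_mul_Ioi hθ hr]
  -- Tonelli
  have hmeas : ∀ x : ℕ, AEMeasurable (fun t => ENNReal.ofReal (F x t))
      (volume.restrict (Ioi (0:ℝ))) := by
    intro x
    apply Measurable.aemeasurable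
    apply Measurable.ennreal_ofReal
    fun_prop
  have key : (∑' x : ℕ, ENNReal.ofReal (b x)) = ENNReal.ofReal C := by
    calc (∑' x : ℕ, ENNReal.ofReal (b x))
        = ∑' x : ℕ, ∫⁻ t in Ioi (0:ℝ), ENNReal.ofReal (F x t) := by
          exact tsum_congr fun x => (claimA x).symm
      _ = ∫⁻ t in Ioi (0:ℝ), ∑' x : ℕ, ENNReal.ofReal (F x t) := (lintegral_tsum hmeas).symm
      _ = ENNReal.ofReal C := claimB
  -- deduce real summability and value
  have hfin : (∑' x : ℕ, ENNReal.ofReal (b x)) ≠ ⊤ := by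
    rw [key]; exact ENNReal.ofReal_ne_top
  have hsummb : Summable b := by
    have := ENNReal.summable_toReal hfin
    refine this.congr fun x => ?_
    rw [ENNReal.toReal_ofReal (hbnn x)]
  have htsumb : ∑' x, b x = C := by
    have h1 : (∑' x : ℕ, ENNReal.ofReal (b x)).toReal = C := by
      rw [key, ENNReal.toReal_ofReal hCpos.le]
    rw [← h1, ENNReal.tsum_toReal_eq (fun x => ENNReal.ofReal_ne_top)]
    exact tsum_congr fun x => (ENNReal.toReal_ofReal (hbnn x)).symm
  have hhs : HasSum b C := htsumb ▸ hsummb.hasSum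
  have hfinal := hhs.div_const (Real.Gamma θ)
  have hCdiv : C / Real.Gamma θ = (1 - p) ^ (-θ) := by
    rw [hC, mul_div_assoc, div_self (Real.Gamma_pos_of_pos hθ).ne', mul_one,
      one_div, Real.inv_rpow hr.le, ← Real.rpow_neg hr.le]
  rw [← hCdiv]
  refine hfinal.congr_fun fun x => ?_
  rw [hb]
  simp only
  field_simp [(hGp x).ne', (Real.Gamma_pos_of_pos hθ).ne']

theorem fNB_hasSum_one
    (μ θ : ℝ) (hμ : 0 < μ) (hθ : 0 < θ) :
    HasSum (fun x : ℕ => fNB x μ θ) 1 ∧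
    ∑' x : ℕ, Real.Gamma ((x : ℝ) + θ) / (Real.Gamma ((x : ℝ) + 1) * Real.Gamma θ) *
      (μ / (θ + μ)) ^ x = ((θ + μ) / θ) ^ θ := by
  have hθμ : 0 < θ + μ := by linarith
  have hp0 : 0 < μ / (θ + μ) := by positivity
  have hp1 : μ / (θ + μ) < 1 := (div_lt_one hθμ).2 (by linarith)
  have h1p : 1 - μ / (θ + μ) = θ / (θ + μ) := by field_simp; ring
  have hq : 0 < θ / (θ + μ) := by positivity
  have hbase := negBinomial_hasSum hθ hp0 hp1
  rw [h1p] at hbase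
  constructor
  · have := hbase.mul_right ((θ / (θ + μ)) ^ θ)
    rw [← Real.rpow_add hq, neg_add_cancel, Real.rpow_zero] at this
    refine this.congr_fun fun x => ?_
    unfold fNB
    ring
  · rw [hbase.tsum_eq, show ((θ+μ)/θ : ℝ) = (θ/(θ+μ))⁻¹ by rw [inv_div], Real.inv_rpow hq.le, ← Real.rpow_neg hq.le]
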